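/- arXiv:2412.10066 — 4 statements merged into one kernel-verified Lean document; each statement's English description precedes it below -/
import Mathlib

section
/- The converse of 'subsumption by matching implies subsumption' fails: for the signature with unary function symbols f, g and constants a, b, the set M = {a, b, f(a), f(b), g(a), g(b)}, and the classes A = {f(x)∈M ∧ g(a)∈M ∧ g(b)∈M ∥ f(x), g(a), g(b)} and B = {f(a)∈M ∧ f(b)∈M ∧ g(x)∈M ∥ f(a), f(b), g(x)} (all terms of each class carrying the same constraint), one has gnd(A) = gnd(B) — hence A subsumes B and B subsumes A — yet neither A subsumes B by matching nor B subsumes A by matching. -/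
namespace NGCC

inductive Tm (F : Type) : Type
  | var : ℕ → Tm F
  | app : F → List (Tm F) → Tm F

instance {F : Type} : Inhabited (Tm F) := ⟨Tm.var 0⟩

namespace Tm
variable {F : Type}

def subst (σ : ℕ → Tm F) : Tm F → Tm F
  | var x => σ x
  | app f ts => app f (ts.attach.map fun t => t.1.subst σ)
  decreasing_by simp only [app.sizeOf_spec]; have h := List.sizeOf_lt_of_mem t.2; omega

def varsList : Tm F → List ℕ
  | var x => [x]
  | app _ ts => (ts.attach.map fun t => t.1.varsList).flatten
  decreasing_by simp only [app.sizeOf_spec]; have h := List.sizeOf_lt_of_mem t.2; omega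

def varsIn (t : Tm F) : Set ℕ := {x | x ∈ t.varsList}

def Ground (t : Tm F) : Prop := t.varsList = []

def size : Tm F → ℕ
  | var _ => 1
  | app _ ts => 1 + (ts.attach.map fun t => t.1.size).sum
  decreasing_by simp only [app.sizeOf_spec]; have h := List.sizeOf_lt_of_mem t.2; omega

def count (x : ℕ) : Tm F → ℕ
  | var y => if y = x then 1 else 0
  | app _ ts => (ts.attach.map fun t => count x t.1).sum
  decreasing_by simp only [app.sizeOf_spec]; have h := List.sizeOf_lt_of_mem t.2; omega

def eval {α : Type} (I : F → List α → α) (v : ℕ → α) : Tm F → α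
  | var x => v x
  | app f ts => I f (ts.attach.map fun t => t.1.eval I v)
  decreasing_by simp only [app.sizeOf_spec]; have h := List.sizeOf_lt_of_mem t.2; omega

end Tm


abbrev Subst (F : Type) := ℕ → Tm F

def Subst.dom {F : Type} (σ : Subst F) : Set ℕ := {x | σ x ≠ Tm.var x}

def Subst.comp {F : Type} (σ δ : Subst F) : Subst F := fun x => (σ x).subst δ

structure CTerm (F : Type) where
  constr : Set (Tm F)
  term : Tm F

abbrev CClass (F : Type) := Set (CTerm F)

variable {F : Type}

/-- Application of a substitution to a constraint (set of atoms `u ∈ M`). -/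
def substConstr (Γ : Set (Tm F)) (σ : Subst F) : Set (Tm F) := (fun u => u.subst σ) '' Γ

def CTerm.subst (ct : CTerm F) (σ : Subst F) : CTerm F :=
  ⟨substConstr ct.constr σ, ct.term.subst σ⟩

def substClass (A : CClass F) (σ : Subst F) : CClass F := (fun ct => ct.subst σ) '' A

/-- `Γσ` is true: every atom of `Γσ` belongs to `M`. -/
def ConstrHolds (M : Set (Tm F)) (Γ : Set (Tm F)) (σ : Subst F) : Prop :=
  substConstr Γ σ ⊆ M

/-- Satisfiability of a constraint with respect to `M`. -/
def ConstrSat (M : Set (Tm F)) (Γ : Set (Tm F)) : Prop :=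
  ∃ σ : Subst F, ConstrHolds M Γ σ

/-- `σ` is grounding for the class `A` (for all its constrained terms). -/
def GroundingForClass (σ : Subst F) (A : CClass F) : Prop :=
  ∀ ct ∈ A, (ct.term.subst σ).Ground ∧ ∀ u ∈ ct.constr, (u.subst σ).Ground

/-- Separating variables of a class. -/
def sepVars (A : CClass F) : Set ℕ := ⋂ ct ∈ A, (CTerm.term ct).varsIn

/-- All variables of the terms of a class. -/
def termVars (A : CClass F) : Set ℕ := ⋃ ct ∈ A, (CTerm.term ct).varsIn

/-- Free variables of a class. -/
def freeVars (A : CClass F) : Set ℕ := termVars A \ sepVars A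

/-- All variables occurring in a class (terms and constraints). -/
def varsAll (A : CClass F) : Set ℕ :=
  ⋃ ct ∈ A, ((CTerm.term ct).varsIn ∪ ⋃ u ∈ CTerm.constr ct, u.varsIn)

/-- `gnd'(A)`. -/
def gnd' (M : Set (Tm F)) (A : CClass F) : Set (CClass F) :=
  { B | ∃ σ : Subst F, Subst.dom σ = sepVars A ∧ (∀ x ∈ Subst.dom σ, (σ x).Ground) ∧
      B = { ct' | ∃ ct ∈ A, ConstrSat M (substConstr (CTerm.constr ct) σ) ∧ ct' = ct.subst σ } }

/-- `gnd(A)`: sets of ground terms. -/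
def gnd (M : Set (Tm F)) (A : CClass F) : Set (Set (Tm F)) :=
  { S | ∃ B ∈ gnd' M A,
      S = { t | ∃ σ : Subst F, GroundingForClass σ B ∧
              ∃ ct ∈ B, ConstrHolds M (CTerm.constr ct) σ ∧ t = (CTerm.term ct).subst σ } }

/-- The elements of `gnd(A)` regarded as classes of constrained ground terms. -/
def gndCl (M : Set (Tm F)) (A : CClass F) : Set (CClass F) :=
  { S | ∃ B ∈ gnd' M A,
      S = { ct' | ∃ σ : Subst F, GroundingForClass σ B ∧
              ∃ ct ∈ B, ConstrHolds M (CTerm.constr ct) σ ∧ ct' = ct.subst σ } }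

/-- `B` subsumes `A`. -/
def Subsumes (M : Set (Tm F)) (B A : CClass F) : Prop :=
  ∀ A' ∈ gnd M A, ∃ B' ∈ gnd M B, A' ⊆ B'

/-- `A` is `M`-constrained: the atom `sᵢ ∈ M` occurs in `Γᵢ` for each `Γᵢ ∥ sᵢ ∈ A`. -/
def MConstrained (A : CClass F) : Prop := ∀ ct ∈ A, CTerm.term ct ∈ CTerm.constr ct

/-- `ρ` is a renaming of the free variables of `A` to fresh variables. -/
def IsNormRenaming (A : CClass F) (ρ : Subst F) : Prop :=
  (∀ x, ∃ y, ρ x = Tm.var y) ∧ (∀ x, x ∉ freeVars A → ρ x = Tm.var x) ∧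
  (∀ x ∈ freeVars A, ∀ x' ∈ freeVars A, ρ x = ρ x' → x = x') ∧
  (∀ x ∈ freeVars A, ∀ y, ρ x = Tm.var y → y ∉ varsAll A)

/-- The normal class `norm(A)` for the renaming `ρ`. -/
def normC (A : CClass F) (ρ : Subst F) : CClass F :=
  { ct' | ∃ ct ∈ A, ct' = ⟨CTerm.constr ct ∪ substConstr (CTerm.constr ct) ρ, CTerm.term ct⟩ } ∪
  { ct' | ∃ ct ∈ A, ((CTerm.term ct).varsIn ∩ freeVars A).Nonempty ∧
      ct' = ⟨CTerm.constr ct ∪ substConstr (CTerm.constr ct) ρ, (CTerm.term ct).subst ρ⟩ }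

/-- `Aμ` for a grounding substitution `μ`: the set of ground terms
`{sμ | Γ ∥ s ∈ A and Γμ true}`. -/
def applyClass (M : Set (Tm F)) (A : CClass F) (μ : Subst F) : Set (Tm F) :=
  { t | ∃ ct ∈ A, ConstrHolds M (CTerm.constr ct) μ ∧ t = (CTerm.term ct).subst μ }

/-- Subterm relation. -/
inductive Subterm {F : Type} : Tm F → Tm F → Prop
  | refl (t : Tm F) : Subterm t t
  | app {s t : Tm F} (f : F) (ts : List (Tm F)) : t ∈ ts → Subterm s t → Subterm s (Tm.app f ts)

/-- `s` occurs as a (sub)term in `Π`. -/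
def OccursIn (s : Tm F) (P : Set (CClass F)) : Prop :=
  ∃ A ∈ P, ∃ ct ∈ A, Subterm s (CTerm.term ct) ∨ ∃ u ∈ CTerm.constr ct, Subterm s u

/-- `M` is `Π`-closed for the ground term `t`. -/
def PiClosed (M : Set (Tm F)) (P : Set (CClass F)) (t : Tm F) : Prop :=
  ∀ s, OccursIn s P → ∀ σ : Subst F, s.subst σ ∈ M →
    ∀ δ : Subst F, (∀ x, σ x ≠ δ x → δ x = t) → s.subst δ ∈ M

/-- Semantic equational consequence: every model of the (implicitly universally
quantified) equations is a model of `s ≈ t`. -/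
def Entails (Eqs : Set (Tm F × Tm F)) (s t : Tm F) : Prop :=
  ∀ (α : Type) (_ : Nonempty α) (I : F → List α → α) (v : ℕ → α),
    (∀ e ∈ Eqs, ∀ w : ℕ → α, Tm.eval I w e.1 = Tm.eval I w e.2) →
    Tm.eval I v s = Tm.eval I v t

/-- `gnd_M(E)`: ground instances of equations of `E` with all ground terms in `M`. -/
def gndM (M : Set (Tm F)) (E : Set (Tm F × Tm F)) : Set (Tm F × Tm F) :=
  { e | ∃ p ∈ E, ∃ σ : Subst F,
      e = (Tm.subst σ p.1, Tm.subst σ p.2) ∧ Tm.subst σ p.1 ∈ M ∧ Tm.subst σ p.2 ∈ M }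

def IsUnifier (μ : Subst F) (s t : Tm F) : Prop := s.subst μ = t.subst μ

def IsMGU (μ : Subst F) (s t : Tm F) : Prop :=
  IsUnifier μ s t ∧ ∀ τ : Subst F, IsUnifier τ s t → ∃ δ : Subst F, τ = Subst.comp μ δ

/-- Simultaneous most general unifier of the equations `s₁ = t₁` and `s₂ = t₂`. -/
def IsSimMGU (μ : Subst F) (s₁ t₁ s₂ t₂ : Tm F) : Prop :=
  IsUnifier μ s₁ t₁ ∧ IsUnifier μ s₂ t₂ ∧
  ∀ τ : Subst F, IsUnifier τ s₁ t₁ → IsUnifier τ s₂ t₂ → ∃ δ : Subst F, τ = Subst.comp μ δ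

/-- Conjoin a constraint to every constrained term of a class. -/
def addConstr (A : CClass F) (Γ : Set (Tm F)) : CClass F :=
  { ct' | ∃ ct ∈ A, ct' = ⟨CTerm.constr ct ∪ Γ, CTerm.term ct⟩ }

/-- The rules of the calculus CC(X). -/
inductive Step {F : Type} (M : Set (Tm F)) : Set (CClass F) → Set (CClass F) → Prop
  | merge (P : Set (CClass F)) (A B C' : CClass F) (ρA ρB μ : Subst F) (ct₁ ct₂ : CTerm F)
      (hA : A ∈ P) (hB : B ∈ P)
      (hρA : IsNormRenaming A ρA) (hρB : IsNormRenaming B ρB)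
      (h1 : ct₁ ∈ A) (h2 : ct₂ ∈ B)
      (hmgu : IsMGU μ ct₁.term ct₂.term)
      (hC' : C' = substClass (addConstr (normC A ρA) (ct₁.constr ∪ ct₂.constr) ∪
                               addConstr (normC B ρB) (ct₁.constr ∪ ct₂.constr)) μ)
      (hnsub : ∀ C ∈ P, ¬ Subsumes M C C') :
      Step M P (insert C' P)
  | deduction (P : Set (CClass F)) (A B C' : CClass F) (f : F)
      (ss ts ss' ts' : List (Tm F)) (Γ Δ : Set (Tm F)) (Γs Δs : List (Set (Tm F))) (μ : Subst F)
      (hA : A ∈ P) (hB : B ∈ P)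
      (h1 : (⟨Γ, Tm.app f ss⟩ : CTerm F) ∈ A)
      (h2 : (⟨Δ, Tm.app f ts⟩ : CTerm F) ∈ B)
      (hl1 : ss'.length = ss.length) (hl2 : ts'.length = ss.length)
      (hl3 : ts.length = ss.length) (hl4 : Γs.length = ss.length) (hl5 : Δs.length = ss.length)
      (hside : ∀ i < ss.length, ∃ D ∈ P, ∃ ρ : Subst F, IsNormRenaming D ρ ∧
          (⟨Γs[i]!, ss'[i]!⟩ : CTerm F) ∈ normC D ρ ∧ (⟨Δs[i]!, ts'[i]!⟩ : CTerm F) ∈ normC D ρ)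
      (hmgu : IsSimMGU μ (Tm.app f ss') (Tm.app f ss) (Tm.app f ts') (Tm.app f ts))
      (hC' : C' = substClass
          ({⟨Γ ∪ Δ ∪ ⋃₀ {G | G ∈ Γs} ∪ ⋃₀ {G | G ∈ Δs}, Tm.app f ss'⟩,
            ⟨Γ ∪ Δ ∪ ⋃₀ {G | G ∈ Γs} ∪ ⋃₀ {G | G ∈ Δs}, Tm.app f ts'⟩} : CClass F) μ)
      (hnsub : ∀ C ∈ P, ¬ Subsumes M C C') :
      Step M P (insert C' P)
  | subsump (P : Set (CClass F)) (A B : CClass F)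
      (hA : A ∈ P) (hB : B ∈ P) (hne : A ≠ B) (hsub : Subsumes M B A) :
      Step M P (P \ {A})

/-- The single-term class `{f(x₁,…,x_k) ∈ M ∥ f(x₁,…,x_k)}`. -/
def singleTermClass (ar : F → ℕ) (f : F) : CClass F :=
  {⟨{Tm.app f ((List.range (ar f)).map Tm.var)}, Tm.app f ((List.range (ar f)).map Tm.var)⟩}

/-- The initial state `Π₀` of CC(X) for the equations `E`. -/
def initState (ar : F → ℕ) (E : Set (Tm F × Tm F)) : Set (CClass F) :=
  { A | ∃ p ∈ E, A = ({⟨{p.1, p.2}, p.1⟩, ⟨{p.1, p.2}, p.2⟩} : CClass F) } ∪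
  { A | ∃ f : F, A = singleTermClass ar f }

/-- `B` subsumes `A` by matching. -/
def SubsumesByMatching (M : Set (Tm F)) (B A : CClass F) : Prop :=
  ∃ σ : Subst F, Subst.dom σ ⊆ sepVars B ∧ (∀ x ∈ sepVars B, (σ x).varsIn ⊆ varsAll A) ∧
    ∀ ct ∈ A, ∃ τ : Subst F, Subst.dom τ ⊆ freeVars B ∧
      (∀ y ∈ freeVars B, (τ y).varsIn ⊆ varsAll A) ∧
      ∃ ct' ∈ B, CTerm.term ct = ((CTerm.term ct').subst σ).subst τ ∧
        ∀ δ : Subst F, ConstrHolds M (CTerm.constr ct) δ →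
          ∃ δ' : Subst F,
            ConstrHolds M (substConstr (substConstr (substConstr (CTerm.constr ct') σ) τ) δ) δ'

/-- `M` determined by the symbol-count ordering and a bound `β`. -/
def Mle (β : Tm F) : Set (Tm F) := { t | t.Ground ∧ t.size ≤ β.size }

def varsFinset (t : Tm F) : Finset ℕ := t.varsList.toFinset

/-- Truth of the LIA abstraction `lic(t ⪯ β)` under an integer assignment `v`. -/
def licHolds (t β : Tm F) (v : ℕ → ℕ) : Prop :=
  (∀ x ∈ varsFinset t, 1 ≤ v x) ∧
  (∑ x ∈ varsFinset t, (t.count x : ℤ) * (v x : ℤ)) ≤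
    (β.size : ℤ) - ((t.size : ℤ) - ∑ x ∈ varsFinset t, (t.count x : ℤ))


/-- The signature of the counterexample: unary `f`, `g` and constants `a`, `b`. -/
inductive F12 : Type
  | f | g | a | b


section Counterexample

open F12

@[simp] theorem aux_subst_var (σ : Subst F12) (x : ℕ) : (Tm.var x).subst σ = σ x := by
  simp [Tm.subst]

@[simp] theorem aux_subst_app0 (σ : Subst F12) (f : F12) :
    (Tm.app f []).subst σ = Tm.app f [] := by simp [Tm.subst]

@[simp] theorem aux_subst_app1 (σ : Subst F12) (f : F12) (t : Tm F12) :
    (Tm.app f [t]).subst σ = Tm.app f [t.subst σ] := by simp [Tm.subst]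

@[simp] theorem aux_varsList_var (x : ℕ) : (Tm.var x : Tm F12).varsList = [x] := by
  simp [Tm.varsList]

@[simp] theorem aux_varsList_app0 (f : F12) : (Tm.app f [] : Tm F12).varsList = [] := by
  simp [Tm.varsList]

@[simp] theorem aux_varsList_app1 (f : F12) (t : Tm F12) :
    (Tm.app f [t]).varsList = t.varsList := by simp [Tm.varsList]

def ca0 : Tm F12 := Tm.app a []
def cb0 : Tm F12 := Tm.app b []
def M0 : Set (Tm F12) :=
  {ca0, cb0, Tm.app f [ca0], Tm.app f [cb0], Tm.app g [ca0], Tm.app g [cb0]}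
def GA : Set (Tm F12) := {Tm.app f [Tm.var 0], Tm.app g [ca0], Tm.app g [cb0]}
def GB : Set (Tm F12) := {Tm.app f [ca0], Tm.app f [cb0], Tm.app g [Tm.var 0]}
def A0 : CClass F12 :=
  {⟨GA, Tm.app f [Tm.var 0]⟩, ⟨GA, Tm.app g [ca0]⟩, ⟨GA, Tm.app g [cb0]⟩}
def B0 : CClass F12 :=
  {⟨GB, Tm.app f [ca0]⟩, ⟨GB, Tm.app f [cb0]⟩, ⟨GB, Tm.app g [Tm.var 0]⟩}
def Sgt : Set (Tm F12) :=
  {Tm.app f [ca0], Tm.app f [cb0], Tm.app g [ca0], Tm.app g [cb0]}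

@[simp] theorem ground_ca0 : ca0.Ground := by simp [ca0, Tm.Ground]
@[simp] theorem ground_cb0 : cb0.Ground := by simp [cb0, Tm.Ground]

@[simp] theorem mem_M0_f (t : Tm F12) :
    Tm.app f [t] ∈ M0 ↔ t = ca0 ∨ t = cb0 := by
  simp [M0, ca0, cb0]

@[simp] theorem mem_M0_g (t : Tm F12) :
    Tm.app g [t] ∈ M0 ↔ t = ca0 ∨ t = cb0 := by
  simp [M0, ca0, cb0]

theorem holds_GA (σ : Subst F12) :
    ConstrHolds M0 GA σ ↔ (σ 0 = ca0 ∨ σ 0 = cb0) := by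
  simp [ConstrHolds, substConstr, GA, Set.image_insert_eq, Set.insert_subset_iff, ca0, cb0]

theorem holds_GB (σ : Subst F12) :
    ConstrHolds M0 GB σ ↔ (σ 0 = ca0 ∨ σ 0 = cb0) := by
  simp [ConstrHolds, substConstr, GB, Set.image_insert_eq, Set.insert_subset_iff, ca0, cb0]

theorem sepVars_A0 : sepVars A0 = ∅ := by
  ext x
  simp only [sepVars, A0, Set.mem_iInter, Set.mem_empty_iff_false, iff_false]
  intro h
  have := h ⟨GA, Tm.app g [ca0]⟩ (by simp)
  simpa [Tm.varsIn, ca0] using this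

theorem sepVars_B0 : sepVars B0 = ∅ := by
  ext x
  simp only [sepVars, B0, Set.mem_iInter, Set.mem_empty_iff_false, iff_false]
  intro h
  have := h ⟨GB, Tm.app f [ca0]⟩ (by simp)
  simpa [Tm.varsIn, ca0] using this

theorem dom_var : Subst.dom (Tm.var : Subst F12) = ∅ := by
  ext x; simp [Subst.dom]

theorem eq_var_of_dom_empty {σ : Subst F12} (h : Subst.dom σ = ∅) : σ = Tm.var := by
  funext x
  by_contra hx
  have : x ∈ Subst.dom σ := hx
  rw [h] at this
  exact this

theorem substConstr_GA_var : substConstr GA Tm.var = GA := by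
  simp [substConstr, GA, Set.image_insert_eq, ca0, cb0]

theorem substConstr_GB_var : substConstr GB Tm.var = GB := by
  simp [substConstr, GB, Set.image_insert_eq, ca0, cb0]

theorem satGA : ConstrSat M0 GA :=
  ⟨fun _ => ca0, (holds_GA _).2 (Or.inl rfl)⟩

theorem satGB : ConstrSat M0 GB :=
  ⟨fun _ => ca0, (holds_GB _).2 (Or.inl rfl)⟩

theorem gnd'_A0 : gnd' M0 A0 = {A0} := by
  ext C
  simp only [gnd', Set.mem_setOf_eq, Set.mem_singleton_iff]
  constructor
  · rintro ⟨σ, hdom, -, rfl⟩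
    have hσ : σ = Tm.var := eq_var_of_dom_empty (by rw [hdom, sepVars_A0])
    subst hσ
    ext ct'
    simp only [Set.mem_setOf_eq]
    constructor
    · rintro ⟨ct, hct, -, rfl⟩
      rcases hct with h | h | h <;> subst h <;>
        simp [A0, CTerm.subst, substConstr_GA_var, ca0, cb0]
    · intro hct'
      refine ⟨ct', hct', ?_, ?_⟩
      · rw [show (CTerm.constr ct') = GA by rcases hct' with h | h | h <;> subst h <;> rfl,
          substConstr_GA_var]
        exact satGA
      · rcases hct' with h | h | h <;> subst h <;>
          simp [CTerm.subst, substConstr_GA_var, ca0, cb0]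
  · rintro rfl
    refine ⟨Tm.var, by rw [dom_var, sepVars_A0], by simp [dom_var], ?_⟩
    ext ct'
    simp only [Set.mem_setOf_eq]
    constructor
    · intro hct'
      refine ⟨ct', hct', ?_, ?_⟩
      · rw [show (CTerm.constr ct') = GA by rcases hct' with h | h | h <;> subst h <;> rfl,
          substConstr_GA_var]
        exact satGA
      · rcases hct' with h | h | h <;> subst h <;>
          simp [CTerm.subst, substConstr_GA_var, ca0, cb0]
    · rintro ⟨ct, hct, -, rfl⟩
      rcases hct with h | h | h <;> subst h <;>
        simp [A0, CTerm.subst, substConstr_GA_var, ca0, cb0]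

theorem gnd'_B0 : gnd' M0 B0 = {B0} := by
  ext C
  simp only [gnd', Set.mem_setOf_eq, Set.mem_singleton_iff]
  constructor
  · rintro ⟨σ, hdom, -, rfl⟩
    have hσ : σ = Tm.var := eq_var_of_dom_empty (by rw [hdom, sepVars_B0])
    subst hσ
    ext ct'
    simp only [Set.mem_setOf_eq]
    constructor
    · rintro ⟨ct, hct, -, rfl⟩
      rcases hct with h | h | h <;> subst h <;>
        simp [B0, CTerm.subst, substConstr_GB_var, ca0, cb0]
    · intro hct'
      refine ⟨ct', hct', ?_, ?_⟩
      · rw [show (CTerm.constr ct') = GB by rcases hct' with h | h | h <;> subst h <;> rfl,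
          substConstr_GB_var]
        exact satGB
      · rcases hct' with h | h | h <;> subst h <;>
          simp [CTerm.subst, substConstr_GB_var, ca0, cb0]
  · rintro rfl
    refine ⟨Tm.var, by rw [dom_var, sepVars_B0], by simp [dom_var], ?_⟩
    ext ct'
    simp only [Set.mem_setOf_eq]
    constructor
    · intro hct'
      refine ⟨ct', hct', ?_, ?_⟩
      · rw [show (CTerm.constr ct') = GB by rcases hct' with h | h | h <;> subst h <;> rfl,
          substConstr_GB_var]
        exact satGB
      · rcases hct' with h | h | h <;> subst h <;>
          simp [CTerm.subst, substConstr_GB_var, ca0, cb0]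
    · rintro ⟨ct, hct, -, rfl⟩
      rcases hct with h | h | h <;> subst h <;>
        simp [B0, CTerm.subst, substConstr_GB_var, ca0, cb0]

theorem grounding_A0 (c : Tm F12) (hc : c.Ground) :
    GroundingForClass (fun _ => c) A0 := by
  intro ct hct
  rcases hct with h | h | h <;> subst h <;>
    · have hc' : c.varsList = [] := hc
      refine ⟨by simp [Tm.Ground, ca0, cb0, hc'], ?_⟩
      intro u hu
      rcases hu with h | h | h <;> subst h <;> simp [Tm.Ground, ca0, cb0, hc']

theorem grounding_B0 (c : Tm F12) (hc : c.Ground) :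
    GroundingForClass (fun _ => c) B0 := by
  intro ct hct
  rcases hct with h | h | h <;> subst h <;>
    · have hc' : c.varsList = [] := hc
      refine ⟨by simp [Tm.Ground, ca0, cb0, hc'], ?_⟩
      intro u hu
      rcases hu with h | h | h <;> subst h <;> simp [Tm.Ground, ca0, cb0, hc']

theorem gnd_A0 : gnd M0 A0 = {Sgt} := by
  ext S
  simp only [gnd, gnd'_A0, Set.mem_setOf_eq, Set.mem_singleton_iff, exists_eq_left]
  constructor
  · rintro rfl
    ext t
    simp only [Set.mem_setOf_eq]
    constructor
    · rintro ⟨σ, -, ct, hct, hch, rfl⟩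
      rcases hct with h | h | h <;> subst h <;>
        simp only [CTerm.constr] at hch
      · rcases (holds_GA σ).1 hch with h0 | h0 <;> simp [Sgt, h0]
      · simp [Sgt, ca0, cb0]
      · simp [Sgt, ca0, cb0]
    · intro ht
      rcases ht with h | h | h | h <;> subst h
      · exact ⟨fun _ => ca0, grounding_A0 ca0 ground_ca0, ⟨GA, Tm.app f [Tm.var 0]⟩,
          by simp [A0], (holds_GA _).2 (Or.inl rfl), by simp⟩
      · exact ⟨fun _ => cb0, grounding_A0 cb0 ground_cb0, ⟨GA, Tm.app f [Tm.var 0]⟩,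
          by simp [A0], (holds_GA _).2 (Or.inr rfl), by simp⟩
      · exact ⟨fun _ => ca0, grounding_A0 ca0 ground_ca0, ⟨GA, Tm.app g [ca0]⟩,
          by simp [A0], (holds_GA _).2 (Or.inl rfl), by simp [ca0]⟩
      · exact ⟨fun _ => ca0, grounding_A0 ca0 ground_ca0, ⟨GA, Tm.app g [cb0]⟩,
          by simp [A0], (holds_GA _).2 (Or.inl rfl), by simp [cb0]⟩
  · rintro rfl
    ext t
    simp only [Set.mem_setOf_eq]
    constructor
    · intro ht
      rcases ht with h | h | h | h <;> subst h
      · exact ⟨fun _ => ca0, grounding_A0 ca0 ground_ca0, ⟨GA, Tm.app f [Tm.var 0]⟩,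
          by simp [A0], (holds_GA _).2 (Or.inl rfl), by simp⟩
      · exact ⟨fun _ => cb0, grounding_A0 cb0 ground_cb0, ⟨GA, Tm.app f [Tm.var 0]⟩,
          by simp [A0], (holds_GA _).2 (Or.inr rfl), by simp⟩
      · exact ⟨fun _ => ca0, grounding_A0 ca0 ground_ca0, ⟨GA, Tm.app g [ca0]⟩,
          by simp [A0], (holds_GA _).2 (Or.inl rfl), by simp [ca0]⟩
      · exact ⟨fun _ => ca0, grounding_A0 ca0 ground_ca0, ⟨GA, Tm.app g [cb0]⟩,
          by simp [A0], (holds_GA _).2 (Or.inl rfl), by simp [cb0]⟩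
    · rintro ⟨σ, -, ct, hct, hch, rfl⟩
      rcases hct with h | h | h <;> subst h <;>
        simp only [CTerm.constr] at hch
      · rcases (holds_GA σ).1 hch with h0 | h0 <;> simp [Sgt, h0]
      · simp [Sgt, ca0, cb0]
      · simp [Sgt, ca0, cb0]

theorem gnd_B0 : gnd M0 B0 = {Sgt} := by
  ext S
  simp only [gnd, gnd'_B0, Set.mem_setOf_eq, Set.mem_singleton_iff, exists_eq_left]
  constructor
  · rintro rfl
    ext t
    simp only [Set.mem_setOf_eq]
    constructor
    · rintro ⟨σ, -, ct, hct, hch, rfl⟩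
      rcases hct with h | h | h <;> subst h <;>
        simp only [CTerm.constr] at hch
      · simp [Sgt, ca0, cb0]
      · simp [Sgt, ca0, cb0]
      · rcases (holds_GB σ).1 hch with h0 | h0 <;> simp [Sgt, h0]
    · intro ht
      rcases ht with h | h | h | h <;> subst h
      · exact ⟨fun _ => ca0, grounding_B0 ca0 ground_ca0, ⟨GB, Tm.app f [ca0]⟩,
          by simp [B0], (holds_GB _).2 (Or.inl rfl), by simp [ca0]⟩
      · exact ⟨fun _ => ca0, grounding_B0 ca0 ground_ca0, ⟨GB, Tm.app f [cb0]⟩,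
          by simp [B0], (holds_GB _).2 (Or.inl rfl), by simp [cb0]⟩
      · exact ⟨fun _ => ca0, grounding_B0 ca0 ground_ca0, ⟨GB, Tm.app g [Tm.var 0]⟩,
          by simp [B0], (holds_GB _).2 (Or.inl rfl), by simp⟩
      · exact ⟨fun _ => cb0, grounding_B0 cb0 ground_cb0, ⟨GB, Tm.app g [Tm.var 0]⟩,
          by simp [B0], (holds_GB _).2 (Or.inr rfl), by simp⟩
  · rintro rfl
    ext t
    simp only [Set.mem_setOf_eq]
    constructor
    · intro ht
      rcases ht with h | h | h | h <;> subst h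
      · exact ⟨fun _ => ca0, grounding_B0 ca0 ground_ca0, ⟨GB, Tm.app f [ca0]⟩,
          by simp [B0], (holds_GB _).2 (Or.inl rfl), by simp [ca0]⟩
      · exact ⟨fun _ => ca0, grounding_B0 ca0 ground_ca0, ⟨GB, Tm.app f [cb0]⟩,
          by simp [B0], (holds_GB _).2 (Or.inl rfl), by simp [cb0]⟩
      · exact ⟨fun _ => ca0, grounding_B0 ca0 ground_ca0, ⟨GB, Tm.app g [Tm.var 0]⟩,
          by simp [B0], (holds_GB _).2 (Or.inl rfl), by simp⟩
      · exact ⟨fun _ => cb0, grounding_B0 cb0 ground_cb0, ⟨GB, Tm.app g [Tm.var 0]⟩,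
          by simp [B0], (holds_GB _).2 (Or.inr rfl), by simp⟩
    · rintro ⟨σ, -, ct, hct, hch, rfl⟩
      rcases hct with h | h | h <;> subst h <;>
        simp only [CTerm.constr] at hch
      · simp [Sgt, ca0, cb0]
      · simp [Sgt, ca0, cb0]
      · rcases (holds_GB σ).1 hch with h0 | h0 <;> simp [Sgt, h0]

theorem not_matching_AB : ¬ SubsumesByMatching M0 A0 B0 := by
  rintro ⟨σ, hdom, -, hall⟩
  have hσ : σ = Tm.var :=
    eq_var_of_dom_empty (Set.eq_empty_iff_forall_notMem.2 fun x hx =>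
      by simpa [sepVars_A0] using hdom hx)
  subst hσ
  obtain ⟨τ, -, -, ct', hct', heq, -⟩ :=
    hall ⟨GB, Tm.app g [Tm.var 0]⟩ (by simp [B0])
  rcases hct' with h | h | h <;> subst h <;> simp [ca0, cb0] at heq

theorem not_matching_BA : ¬ SubsumesByMatching M0 B0 A0 := by
  rintro ⟨σ, hdom, -, hall⟩
  have hσ : σ = Tm.var :=
    eq_var_of_dom_empty (Set.eq_empty_iff_forall_notMem.2 fun x hx =>
      by simpa [sepVars_B0] using hdom hx)
  subst hσ
  obtain ⟨τ, -, -, ct', hct', heq, -⟩ :=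
    hall ⟨GA, Tm.app f [Tm.var 0]⟩ (by simp [A0])
  rcases hct' with h | h | h <;> subst h <;> simp [ca0, cb0] at heq

theorem main_counterexample :
    gnd M0 A0 = gnd M0 B0 ∧ Subsumes M0 A0 B0 ∧ Subsumes M0 B0 A0 ∧
      ¬ SubsumesByMatching M0 A0 B0 ∧ ¬ SubsumesByMatching M0 B0 A0 := by
  have hAB : gnd M0 A0 = gnd M0 B0 := by rw [gnd_A0, gnd_B0]
  refine ⟨hAB, ?_, ?_, not_matching_AB, not_matching_BA⟩
  · intro A' hA'
    exact ⟨A', hAB ▸ hA', subset_rfl⟩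
  · intro A' hA'
    exact ⟨A', hAB.symm ▸ hA', subset_rfl⟩

end Counterexample

open F12 in
/-- The converse of `subsumption by matching implies
subsumption` fails. -/
theorem matching_converse_fails :
    let ca : Tm F12 := Tm.app a []
    let cb : Tm F12 := Tm.app b []
    let M : Set (Tm F12) :=
      {ca, cb, Tm.app f [ca], Tm.app f [cb], Tm.app g [ca], Tm.app g [cb]}
    let ΓA : Set (Tm F12) := {Tm.app f [Tm.var 0], Tm.app g [ca], Tm.app g [cb]}
    let ΓB : Set (Tm F12) := {Tm.app f [ca], Tm.app f [cb], Tm.app g [Tm.var 0]}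
    let A : CClass F12 :=
      {⟨ΓA, Tm.app f [Tm.var 0]⟩, ⟨ΓA, Tm.app g [ca]⟩, ⟨ΓA, Tm.app g [cb]⟩}
    let B : CClass F12 :=
      {⟨ΓB, Tm.app f [ca]⟩, ⟨ΓB, Tm.app f [cb]⟩, ⟨ΓB, Tm.app g [Tm.var 0]⟩}
    gnd M A = gnd M B ∧ Subsumes M A B ∧ Subsumes M B A ∧
      ¬ SubsumesByMatching M A B ∧ ¬ SubsumesByMatching M B A := by
  exact main_counterexample

end NGCC
end

section
/- Reduction of constraint-only variables: let M = {t ground | size(t) ≤ size(β)} for a fixed ground term β. Let A = {Γ ∥ s₁, …, Γ ∥ sₙ} be a class all of whose constrained terms carry the same constraint Γ, let Y = vars(Γ) \ (vars(s₁) ∪ … ∪ vars(sₙ)) be the variables occurring in Γ but in none of the terms s₁, …, sₙ, and let σ map every variable of Y to a single fresh variable y' ∈ 𝒳. Then A subsumes Aσ and Aσ subsumes A; in particular gnd(A) = gnd(Aσ). -/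
namespace NGCC

namespace Tm
variable {F : Type}

theorem ind_on {motive : Tm F → Prop}
    (hv : ∀ x, motive (var x))
    (ha : ∀ f ts, (∀ t ∈ ts, motive t) → motive (app f ts)) : ∀ t, motive t
  | var x => hv x
  | app f ts => ha f ts (fun t ht => ind_on hv ha t)
  decreasing_by have h := List.sizeOf_lt_of_mem ht; simp only [app.sizeOf_spec]; omega

theorem subst_app (σ : ℕ → Tm F) (f : F) (ts : List (Tm F)) :
    (app f ts).subst σ = app f (ts.map (·.subst σ)) := by
  rw [subst]; congr 1; simp [List.attach_map_val]

theorem varsList_app (f : F) (ts : List (Tm F)) :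
    (app f ts).varsList = (ts.map varsList).flatten := by
  rw [varsList]; congr 1; simp [List.attach_map_val]

theorem size_app (f : F) (ts : List (Tm F)) :
    (app f ts).size = 1 + (ts.map size).sum := by
  rw [size]; congr 2; simp [List.attach_map_val]

theorem mem_varsList_subst (σ : ℕ → Tm F) (t : Tm F) :
    ∀ x, x ∈ (t.subst σ).varsList ↔ ∃ y ∈ t.varsList, x ∈ (σ y).varsList := by
  induction t using ind_on with
  | hv z => intro x; simp [subst, varsList]
  | ha f ts ih =>
    intro x
    rw [subst_app, varsList_app, varsList_app]
    simp only [List.mem_flatten, List.mem_map]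
    constructor
    · rintro ⟨l, ⟨u, ⟨v, hv, rfl⟩, rfl⟩, hx⟩
      obtain ⟨y, hy, hxy⟩ := (ih v hv x).1 hx
      exact ⟨y, ⟨v.varsList, ⟨v, hv, rfl⟩, hy⟩, hxy⟩
    · rintro ⟨y, ⟨l, ⟨v, hv, rfl⟩, hy⟩, hxy⟩
      exact ⟨(v.subst σ).varsList, ⟨v.subst σ, ⟨v, hv, rfl⟩, rfl⟩, (ih v hv x).2 ⟨y, hy, hxy⟩⟩

theorem ground_iff (t : Tm F) : t.Ground ↔ ∀ x, x ∉ t.varsList := by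
  unfold Ground; exact List.eq_nil_iff_forall_not_mem

theorem ground_subst_iff (σ : ℕ → Tm F) (t : Tm F) :
    (t.subst σ).Ground ↔ ∀ y ∈ t.varsList, (σ y).Ground := by
  simp only [ground_iff, mem_varsList_subst]
  constructor
  · intro h y hy x hx; exact h x ⟨y, hy, hx⟩
  · rintro h x ⟨y, hy, hx⟩; exact h y hy x hx

theorem subst_congr {σ τ : ℕ → Tm F} (t : Tm F) (h : ∀ x ∈ t.varsList, σ x = τ x) :
    t.subst σ = t.subst τ := by
  induction t using ind_on with
  | hv z => simp only [varsList] at h; simp [subst, h z (by simp)]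
  | ha f ts ih =>
    rw [subst_app, subst_app]
    congr 1
    refine List.map_congr_left fun u hu => ih u hu fun x hx => h x ?_
    rw [varsList_app]; simp only [List.mem_flatten, List.mem_map]
    exact ⟨u.varsList, ⟨u, hu, rfl⟩, hx⟩

theorem subst_var_eq (t : Tm F) : t.subst Tm.var = t := by
  induction t using ind_on with
  | hv z => rw [subst]
  | ha f ts ih =>
    rw [subst_app]
    congr 1
    exact (List.map_congr_left fun u hu => ih u hu).trans (List.map_id _)

theorem subst_subst (σ τ : ℕ → Tm F) (t : Tm F) :
    (t.subst σ).subst τ = t.subst (fun x => (σ x).subst τ) := by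
  induction t using ind_on with
  | hv z => rw [subst, subst]
  | ha f ts ih =>
    rw [subst_app, subst_app, subst_app, List.map_map]
    congr 1
    exact List.map_congr_left fun u hu => ih u hu

theorem one_le_size (t : Tm F) : 1 ≤ t.size := by
  cases t with
  | var z => rw [size]
  | app f ts => rw [size_app]; omega

theorem size_subst_le {σ τ : ℕ → Tm F} (t : Tm F)
    (h : ∀ x ∈ t.varsList, (σ x).size ≤ (τ x).size) :
    (t.subst σ).size ≤ (t.subst τ).size := by
  induction t using ind_on with
  | hv z => simp only [varsList] at h; simpa [subst] using h z (by simp)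
  | ha f ts ih =>
    rw [subst_app, subst_app, size_app, size_app, List.map_map, List.map_map]
    have h2 : ∀ u ∈ ts, (size ∘ fun x => subst σ x) u ≤ (size ∘ fun x => subst τ x) u := by
      intro u hu
      refine ih u hu fun x hx => h x ?_
      rw [varsList_app]; simp only [List.mem_flatten, List.mem_map]
      exact ⟨u.varsList, ⟨u, hu, rfl⟩, hx⟩
    have := List.sum_le_sum h2
    omega

theorem subst_ground {t : Tm F} (ht : t.Ground) (σ : ℕ → Tm F) : t.subst σ = t := by
  rw [show t.subst σ = t.subst Tm.var from subst_congr t fun x hx => by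
    rw [ground_iff] at ht; exact absurd hx (ht x), subst_var_eq]

end Tm



variable {F : Type}

/-- Reduction of constraint-only variables: mapping all
variables that occur only in the (shared) constraint of a class to a single
fresh variable yields a mutually subsuming class with the same groundings. -/
theorem reduce_constraint_variables {F : Type} [Nonempty F]
    (β : Tm F) (hβ : β.Ground)
    (A : CClass F) (hAfin : A.Finite)
    (Γ : Set (Tm F)) (hconstr : ∀ ct ∈ A, CTerm.constr ct = Γ)
    (y' : ℕ) (hy' : y' ∉ varsAll A) (σ : Subst F)
    (hσ1 : ∀ x ∈ (⋃ u ∈ Γ, Tm.varsIn u) \ termVars A, σ x = Tm.var y')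
    (hσ2 : ∀ x, x ∉ (⋃ u ∈ Γ, Tm.varsIn u) \ termVars A → σ x = Tm.var x) :
    Subsumes (Mle β) A (substClass A σ) ∧ Subsumes (Mle β) (substClass A σ) A ∧
      gnd (Mle β) A = gnd (Mle β) (substClass A σ) := by
  classical
  rcases A.eq_empty_or_nonempty with rfl | ⟨ct₀, hct₀⟩
  · refine ⟨?_, ?_, ?_⟩ <;> simp only [substClass, Set.image_empty]
    · exact fun A' h => ⟨A', h, subset_rfl⟩
    · exact fun A' h => ⟨A', h, subset_rfl⟩
  set Y : Set ℕ := (⋃ u ∈ Γ, Tm.varsIn u) \ termVars A with hYdef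
  obtain ⟨f₀⟩ := ‹Nonempty F›
  set c : Tm F := Tm.app f₀ [] with hc
  have hc_ground : c.Ground := by
    rw [hc, Tm.Ground, Tm.varsList_app]; simp
  have hc_size : c.size = 1 := by rw [hc, Tm.size_app]; simp
  have hy'' : ∀ ct ∈ A, y' ∉ (CTerm.term ct).varsIn ∧ ∀ u ∈ ct.constr, y' ∉ u.varsIn := by
    intro ct hct
    have h1 : y' ∉ (CTerm.term ct).varsIn ∪ ⋃ u ∈ ct.constr, u.varsIn := by
      intro h; exact hy' (Set.mem_biUnion hct h)
    exact ⟨fun h => h1 (Or.inl h), fun u hu h => h1 (Or.inr (Set.mem_biUnion hu h))⟩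
  have hy'Γ : ∀ u ∈ Γ, y' ∉ u.varsList := by
    intro u hu
    exact (hy'' ct₀ hct₀).2 u (by rw [hconstr ct₀ hct₀]; exact hu)
  have hy'T : ∀ ct ∈ A, y' ∉ (CTerm.term ct).varsList := by
    intro ct hct
    exact (hy'' ct hct).1
  have hsep_mem : ∀ x ∈ sepVars A, ∀ ct ∈ A, x ∈ (CTerm.term ct).varsIn := by
    intro x hx ct hct
    unfold sepVars at hx
    simp only [Set.mem_iInter] at hx
    exact hx ct hct
  have hy'sep : y' ∉ sepVars A := fun h => (hy'' ct₀ hct₀).1 (hsep_mem _ h ct₀ hct₀)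
  have htermY : ∀ ct ∈ A, ∀ x, x ∈ (CTerm.term ct).varsList → x ∉ Y := by
    intro ct hct x hx hxY
    exact hxY.2 (Set.mem_biUnion hct (show x ∈ (CTerm.term ct).varsIn from hx))
  have hsepY : ∀ x ∈ sepVars A, x ∉ Y := fun x hx =>
    htermY ct₀ hct₀ x (hsep_mem x hx ct₀ hct₀)
  have hσ_term : ∀ ct ∈ A, (CTerm.term ct).subst σ = CTerm.term ct := by
    intro ct hct
    rw [show (CTerm.term ct).subst σ = (CTerm.term ct).subst Tm.var from
      Tm.subst_congr _ fun x hx => hσ2 x (htermY ct hct x hx), Tm.subst_var_eq]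
  have hct_subst : ∀ ct ∈ A, ct.subst σ = ⟨substConstr Γ σ, CTerm.term ct⟩ := by
    intro ct hct
    unfold CTerm.subst
    rw [hconstr ct hct, hσ_term ct hct]
  have hsep_eq : sepVars (substClass A σ) = sepVars A := by
    unfold sepVars
    ext x
    simp only [Set.mem_iInter]
    constructor
    · intro h ct hct
      have := h (ct.subst σ) ⟨ct, hct, rfl⟩
      rwa [hct_subst ct hct] at this
    · rintro h ct' ⟨ct, hct, rfl⟩
      show x ∈ (CTerm.term (ct.subst σ)).varsIn
      rw [hct_subst ct hct]
      exact h ct hct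
  have hHolds : ∀ (Δ : Set (Tm F)) (θ δ : Subst F),
      ConstrHolds (Mle β) (substConstr Δ θ) δ ↔ ∀ u ∈ Δ, (u.subst θ).subst δ ∈ Mle β := by
    intro Δ θ δ
    constructor
    · intro h u hu; exact h ⟨u.subst θ, ⟨u, hu, rfl⟩, rfl⟩
    · intro h v hv
      obtain ⟨w, hw, rfl⟩ := hv
      obtain ⟨u, hu, rfl⟩ := hw
      exact h u hu
  have hHolds2 : ∀ (Δ : Set (Tm F)) (θ₁ θ₂ δ : Subst F),
      ConstrHolds (Mle β) (substConstr (substConstr Δ θ₁) θ₂) δ ↔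
        ∀ u ∈ Δ, ((u.subst θ₁).subst θ₂).subst δ ∈ Mle β := by
    intro Δ θ₁ θ₂ δ
    rw [hHolds]
    constructor
    · intro h u hu; exact h (u.subst θ₁) ⟨u, hu, rfl⟩
    · rintro h v ⟨u, hu, rfl⟩; exact h u hu
  have hkey : ∀ τ : Subst F, Subst.dom τ = sepVars A → (∀ x ∈ Subst.dom τ, (τ x).Ground) →
      {t | ∃ μ : Subst F,
          GroundingForClass μ {ct' | ∃ ct ∈ A, ConstrSat (Mle β) (substConstr ct.constr τ) ∧ ct' = ct.subst τ} ∧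
          ∃ ct ∈ {ct' | ∃ ct ∈ A, ConstrSat (Mle β) (substConstr ct.constr τ) ∧ ct' = ct.subst τ},
            ConstrHolds (Mle β) ct.constr μ ∧ t = (CTerm.term ct).subst μ} =
      {t | ∃ μ : Subst F,
          GroundingForClass μ {ct' | ∃ ct ∈ substClass A σ, ConstrSat (Mle β) (substConstr ct.constr τ) ∧ ct' = ct.subst τ} ∧
          ∃ ct ∈ {ct' | ∃ ct ∈ substClass A σ, ConstrSat (Mle β) (substConstr ct.constr τ) ∧ ct' = ct.subst τ},
            ConstrHolds (Mle β) ct.constr μ ∧ t = (CTerm.term ct).subst μ} := by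
    intro τ hdom hgrd
    have hτ_id : ∀ x, x ∉ sepVars A → τ x = Tm.var x := by
      intro x hx
      by_contra h
      exact hx (hdom ▸ (show x ∈ Subst.dom τ from h))
    have hτ_gr : ∀ x ∈ sepVars A, (τ x).Ground := fun x hx =>
      hgrd x (show x ∈ Subst.dom τ by rw [hdom]; exact hx)
    have hτ_vars : ∀ x z, z ∈ (τ x).varsList → z = x := by
      intro x z hz
      by_cases hx : x ∈ sepVars A
      · exact absurd hz ((Tm.ground_iff _).1 (hτ_gr x hx) z)
      · rw [hτ_id x hx] at hz; simpa [Tm.varsList] using hz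
    have hμ'_eq : ∀ (μ : Subst F) (u : Tm F), y' ∉ u.varsList →
        (u.subst τ).subst (fun z => if z = y' then c else μ z) = (u.subst τ).subst μ := by
      intro μ u hu
      apply Tm.subst_congr
      intro z hz
      obtain ⟨x, hx, hzx⟩ := (Tm.mem_varsList_subst τ u z).1 hz
      have hzy : z ≠ y' := by rw [hτ_vars x z hzx]; exact fun h => hu (h ▸ hx)
      simp only [if_neg hzy]
    have eq1 : ∀ (μ : Subst F) (u : Tm F), y' ∉ u.varsList →
        ((u.subst σ).subst τ).subst (fun z => if z = y' then c else μ z) =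
          u.subst (fun x => if x ∈ Y then c else (τ x).subst μ) := by
      intro μ u hu
      rw [Tm.subst_subst, Tm.subst_subst]
      apply Tm.subst_congr
      intro x hx
      by_cases hxY : x ∈ Y
      · rw [hσ1 x hxY]
        simp only [Tm.subst]
        rw [hτ_id y' hy'sep]
        simp only [Tm.subst]
        rw [if_pos hxY]
        simp
      · rw [hσ2 x hxY]
        simp only [Tm.subst, if_neg hxY]
        apply Tm.subst_congr
        intro z hz
        have hzy : z ≠ y' := by rw [hτ_vars x z hz]; exact fun h => hu (h ▸ hx)
        simp only [if_neg hzy]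
    have eq2 : ∀ (μ : Subst F) (u : Tm F),
        (u.subst τ).subst μ = u.subst (fun x => if x ∈ Y then μ x else (τ x).subst μ) := by
      intro μ u
      rw [Tm.subst_subst]
      apply Tm.subst_congr
      intro x hx
      by_cases hxY : x ∈ Y
      · rw [hτ_id x (fun hs => hsepY x hs hxY)]
        simp only [Tm.subst, if_pos hxY]
      · simp only [if_neg hxY]
    have hgtr : ∀ (μ : Subst F) (u : Tm F), y' ∉ u.varsList →
        ((u.subst τ).subst μ).Ground →
        (((u.subst σ).subst τ).subst (fun z => if z = y' then c else μ z)).Ground := by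
      intro μ u hu hg
      rw [eq1 μ u hu, Tm.ground_subst_iff]
      rw [eq2 μ u, Tm.ground_subst_iff] at hg
      intro x hx
      by_cases hxY : x ∈ Y
      · simp only [if_pos hxY]; exact hc_ground
      · have := hg x hx
        simp only [if_neg hxY] at this ⊢
        exact this
    have hMtr : ∀ (μ : Subst F) (u : Tm F), y' ∉ u.varsList →
        (u.subst τ).subst μ ∈ Mle β →
        ((u.subst σ).subst τ).subst (fun z => if z = y' then c else μ z) ∈ Mle β := by
      intro μ u hu hm
      simp only [Mle, Set.mem_setOf_eq] at hm ⊢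
      refine ⟨hgtr μ u hu hm.1, ?_⟩
      calc (((u.subst σ).subst τ).subst (fun z => if z = y' then c else μ z)).size
          = (u.subst (fun x => if x ∈ Y then c else (τ x).subst μ)).size := by
            rw [eq1 μ u hu]
        _ ≤ (u.subst (fun x => if x ∈ Y then μ x else (τ x).subst μ)).size := by
            refine Tm.size_subst_le u fun x hx => ?_
            by_cases hxY : x ∈ Y
            · simp only [if_pos hxY, hc_size]; exact Tm.one_le_size _
            · simp only [if_neg hxY]; exact le_refl _
        _ = ((u.subst τ).subst μ).size := by rw [← eq2 μ u]
        _ ≤ β.size := hm.2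
    have hkey2 : ∀ (μ' : Subst F) (u : Tm F),
        (u.subst τ).subst (fun x => ((σ x).subst τ).subst μ') = ((u.subst σ).subst τ).subst μ' := by
      intro μ' u
      rw [Tm.subst_subst, Tm.subst_subst, Tm.subst_subst]
      apply Tm.subst_congr
      intro x _
      by_cases hx : x ∈ sepVars A
      · have hg := hτ_gr x hx
        rw [hσ2 x (hsepY x hx)]
        simp only [Tm.subst]
        rw [Tm.subst_ground hg, Tm.subst_ground hg]
      · rw [hτ_id x hx]
        simp only [Tm.subst]
        rw [Tm.subst_subst]
    have hsat_iff : ConstrSat (Mle β) (substConstr Γ τ) ↔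
        ConstrSat (Mle β) (substConstr (substConstr Γ σ) τ) := by
      constructor
      · rintro ⟨δ, hδ⟩
        refine ⟨fun z => if z = y' then c else δ z, ?_⟩
        rw [hHolds2]
        intro u hu
        exact hMtr δ u (hy'Γ u hu) ((hHolds Γ τ δ).1 hδ u hu)
      · rintro ⟨δ, hδ⟩
        refine ⟨fun x => ((σ x).subst τ).subst δ, ?_⟩
        rw [hHolds]
        intro u hu
        rw [hkey2 δ u]
        exact (hHolds2 Γ σ τ δ).1 hδ u hu
    ext t
    simp only [Set.mem_setOf_eq]
    constructor
    · rintro ⟨μ, hgnd, ct', hct'B, hch, rfl⟩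
      obtain ⟨ct1, hct1, hsat, rfl⟩ := hct'B
      have hsatΓ : ConstrSat (Mle β) (substConstr Γ τ) := by
        rw [← hconstr ct1 hct1]; exact hsat
      have hsatσ : ConstrSat (Mle β) (substConstr (substConstr Γ σ) τ) := hsat_iff.1 hsatΓ
      have hch' : ∀ u ∈ Γ, (u.subst τ).subst μ ∈ Mle β :=
        (hHolds Γ τ μ).1 (by rw [← hconstr ct1 hct1]; exact hch)
      refine ⟨fun z => if z = y' then c else μ z, ?_,
        (ct1.subst σ).subst τ, ⟨ct1.subst σ, ⟨ct1, hct1, rfl⟩, ?_, rfl⟩, ?_, ?_⟩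
      · rintro ct'' ⟨ct2', ⟨ct2, hct2, rfl⟩, hsat2, rfl⟩
        constructor
        · have hterm := (hgnd (ct2.subst τ)
            ⟨ct2, hct2, (by rw [hconstr ct2 hct2]; exact hsatΓ), rfl⟩).1
          exact hgtr μ (CTerm.term ct2) (hy'T ct2 hct2) hterm
        · rintro v ⟨w, ⟨u, hu, rfl⟩, rfl⟩
          have huΓ : u ∈ Γ := by rw [← hconstr ct2 hct2]; exact hu
          have hatom := (hgnd (ct2.subst τ)
            ⟨ct2, hct2, (by rw [hconstr ct2 hct2]; exact hsatΓ), rfl⟩).2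
            (u.subst τ) ⟨u, hu, rfl⟩
          exact hgtr μ u (hy'Γ u huΓ) hatom
      · show ConstrSat (Mle β) (substConstr (substConstr (CTerm.constr ct1) σ) τ)
        rw [hconstr ct1 hct1]
        exact hsatσ
      · show ConstrHolds (Mle β) (substConstr (substConstr (CTerm.constr ct1) σ) τ) _
        rw [hconstr ct1 hct1, hHolds2]
        intro u hu
        exact hMtr μ u (hy'Γ u hu) (hch' u hu)
      · show ((CTerm.term ct1).subst τ).subst μ =
          (((CTerm.term ct1).subst σ).subst τ).subst (fun z => if z = y' then c else μ z)
        rw [hσ_term ct1 hct1, hμ'_eq μ (CTerm.term ct1) (hy'T ct1 hct1)]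
    · rintro ⟨μ', hgnd', ct'', hmem, hch, rfl⟩
      obtain ⟨ct1', ⟨ct1, hct1, rfl⟩, hsat', rfl⟩ := hmem
      have hsatσ : ConstrSat (Mle β) (substConstr (substConstr Γ σ) τ) := by
        rw [← hconstr ct1 hct1]; exact hsat'
      have hsatΓ : ConstrSat (Mle β) (substConstr Γ τ) := hsat_iff.2 hsatσ
      have hch' : ∀ u ∈ Γ, ((u.subst σ).subst τ).subst μ' ∈ Mle β :=
        (hHolds2 Γ σ τ μ').1 (by rw [← hconstr ct1 hct1]; exact hch)
      refine ⟨fun x => ((σ x).subst τ).subst μ', ?_,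
        ct1.subst τ, ⟨ct1, hct1, (by rw [hconstr ct1 hct1]; exact hsatΓ), rfl⟩, ?_, ?_⟩
      · rintro ct2' ⟨ct2, hct2, hsat2, rfl⟩
        have hmem2 : (ct2.subst σ).subst τ ∈
            {ct' | ∃ ct ∈ substClass A σ, ConstrSat (Mle β) (substConstr ct.constr τ) ∧ ct' = ct.subst τ} :=
          ⟨ct2.subst σ, ⟨ct2, hct2, rfl⟩,
            (show ConstrSat (Mle β) (substConstr (substConstr (CTerm.constr ct2) σ) τ) by
              rw [hconstr ct2 hct2]; exact hsatσ), rfl⟩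
        constructor
        · have hterm := (hgnd' ((ct2.subst σ).subst τ) hmem2).1
          show (((CTerm.term ct2).subst τ).subst (fun x => ((σ x).subst τ).subst μ')).Ground
          rw [hkey2 μ' (CTerm.term ct2)]
          exact hterm
        · rintro v ⟨u, hu, rfl⟩
          have hatom := (hgnd' ((ct2.subst σ).subst τ) hmem2).2
            ((u.subst σ).subst τ) ⟨u.subst σ, ⟨u, hu, rfl⟩, rfl⟩
          show ((u.subst τ).subst (fun x => ((σ x).subst τ).subst μ')).Ground
          rw [hkey2 μ' u]
          exact hatom
      · show ConstrHolds (Mle β) (substConstr (CTerm.constr ct1) τ) _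
        rw [hconstr ct1 hct1, hHolds]
        intro u hu
        rw [hkey2 μ' u]
        exact hch' u hu
      · show (((CTerm.term ct1).subst σ).subst τ).subst μ' =
          ((CTerm.term ct1).subst τ).subst (fun x => ((σ x).subst τ).subst μ')
        rw [hkey2 μ' (CTerm.term ct1)]
  have hg : gnd (Mle β) A = gnd (Mle β) (substClass A σ) := by
    ext S
    simp only [gnd, gnd', Set.mem_setOf_eq]
    constructor
    · rintro ⟨B, ⟨τ, hdom, hgr, rfl⟩, rfl⟩
      exact ⟨_, ⟨τ, by rw [hsep_eq]; exact hdom, hgr, rfl⟩, hkey τ hdom hgr⟩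
    · rintro ⟨B, ⟨τ, hdom, hgr, rfl⟩, rfl⟩
      rw [hsep_eq] at hdom
      exact ⟨_, ⟨τ, hdom, hgr, rfl⟩, (hkey τ hdom hgr).symm⟩
  refine ⟨?_, ?_, hg⟩
  · intro A' h
    rw [← hg] at h
    exact ⟨A', h, subset_rfl⟩
  · intro A' h
    rw [hg] at h
    exact ⟨A', h, subset_rfl⟩


end NGCC
end

section
/- Correctness of the LIA constraint abstraction, soundness direction: let t be a term with vars(t) = {x₁,…,xₙ} and β a ground term. For any ground substitution σ = {xᵢ ↦ sᵢ | 1 ≤ i ≤ n}: if size(tσ) ≤ size(β), then the formula lic(t ⪯ β) is true under the integer assignment xᵢ ↦ size(sᵢ) for 1 ≤ i ≤ n. -/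
namespace NGCC

variable {F : Type}

theorem Tm.myInd {P : Tm F → Prop} (hv : ∀ x, P (Tm.var x))
    (ha : ∀ f ts, (∀ t ∈ ts, P t) → P (Tm.app f ts)) : ∀ t, P t
  | Tm.var x => hv x
  | Tm.app f ts => ha f ts (fun t ht => Tm.myInd hv ha t)
  decreasing_by simp only [Tm.app.sizeOf_spec]; have h := List.sizeOf_lt_of_mem ht; omega

lemma Tm.size_app_s15 (f : F) (ts : List (Tm F)) :
    (Tm.app f ts).size = 1 + (ts.map Tm.size).sum := by
  rw [Tm.size]
  congr 1
  rw [← List.attach_map_val (l := ts) (f := Tm.size)]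

lemma Tm.subst_app_s15 (σ : Subst F) (f : F) (ts : List (Tm F)) :
    (Tm.app f ts).subst σ = Tm.app f (ts.map (fun t => t.subst σ)) := by
  rw [Tm.subst]
  congr 1
  rw [← List.attach_map_val (l := ts) (f := fun t => t.subst σ)]

lemma Tm.varsList_app_s15 (f : F) (ts : List (Tm F)) :
    (Tm.app f ts).varsList = (ts.map Tm.varsList).flatten := by
  rw [Tm.varsList]
  congr 1
  rw [← List.attach_map_val (l := ts) (f := Tm.varsList)]

lemma Tm.count_app (x : ℕ) (f : F) (ts : List (Tm F)) :
    (Tm.app f ts).count x = (ts.map (Tm.count x)).sum := by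
  rw [Tm.count]
  congr 1
  rw [← List.attach_map_val (l := ts) (f := Tm.count x)]

lemma Tm.size_pos (t : Tm F) : 1 ≤ t.size := by
  cases t with
  | var x => simp [Tm.size]
  | app f ts => rw [Tm.size_app_s15]; omega

lemma Tm.subst_size (σ : Subst F) (t : Tm F) :
    (t.subst σ).size + t.varsList.length
      = t.size + (t.varsList.map (fun x => (σ x).size)).sum := by
  induction t using Tm.myInd with
  | hv x => simp [Tm.subst, Tm.varsList, Tm.size]; omega
  | ha f ts ih =>
    rw [Tm.subst_app_s15, Tm.size_app_s15, Tm.varsList_app_s15, Tm.size_app_s15,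
        List.map_map, List.map_flatten, List.sum_flatten, List.length_flatten,
        List.map_map, List.map_map]
    induction ts with
    | nil => simp
    | cons a l ihl =>
      have ha' := ih a (by simp)
      have hl' := ihl (fun t ht => ih t (by simp [ht]))
      simp only [List.map_cons, List.sum_cons, Function.comp] at *
      omega

lemma Tm.count_eq_count (x : ℕ) (t : Tm F) : t.count x = t.varsList.count x := by
  induction t using Tm.myInd with
  | hv y =>
    rw [Tm.count, Tm.varsList]
    by_cases h : y = x <;> simp [h, List.count_cons]
  | ha f ts ih =>
    rw [Tm.count_app, Tm.varsList_app_s15]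
    induction ts with
    | nil => simp
    | cons a l ihl =>
      have ha' := ih a (by simp)
      have hl' := ihl (fun t ht => ih t (by simp [ht]))
      simp only [List.map_cons, List.sum_cons, List.flatten_cons, List.count_append] at *
      omega

/-- Correctness of the LIA constraint abstraction, soundness
direction. -/
theorem lic_sound {F : Type} [Nonempty F]
    (t β : Tm F) (hβ : β.Ground) (σ : Subst F)
    (hg : ∀ x ∈ t.varsIn, (σ x).Ground)
    (h : (t.subst σ).size ≤ β.size) :
    licHolds t β (fun x => (σ x).size) := by
  constructor
  · intro x _; exact Tm.size_pos (σ x)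
  · have key := Tm.subst_size σ t
    have hsum : (t.varsList.map (fun x => (σ x).size)).sum
        = ∑ x ∈ varsFinset t, t.count x * (σ x).size := by
      rw [Finset.sum_list_map_count]
      apply Finset.sum_congr rfl
      intro x _
      rw [Tm.count_eq_count, smul_eq_mul]
    have hlen : t.varsList.length = ∑ x ∈ varsFinset t, t.count x := by
      have := Finset.sum_list_map_count t.varsList (fun _ => (1 : ℕ))
      simp only [List.map_const', List.sum_replicate, smul_eq_mul, mul_one] at this
      rw [this]
      apply Finset.sum_congr rfl
      intro x _
      simp [Tm.count_eq_count]
    rw [hsum, hlen] at key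
    have h1 : (∑ x ∈ varsFinset t, (t.count x : ℤ) * ((σ x).size : ℤ))
        = ((∑ x ∈ varsFinset t, t.count x * (σ x).size : ℕ) : ℤ) := by
      push_cast; rfl
    have h2 : (∑ x ∈ varsFinset t, (t.count x : ℤ))
        = ((∑ x ∈ varsFinset t, t.count x : ℕ) : ℤ) := by
      push_cast; rfl
    simp only [h1, h2]
    omega

end NGCC
end

section
/- Correctness of the LIA constraint abstraction, completeness direction: let t be a term with vars(t) = {x₁,…,xₙ} and β a ground term. For any integer assignment σ = {xᵢ ↦ kᵢ | 1 ≤ i ≤ n, kᵢ ∈ ℕ}: if lic(t ⪯ β) is true under σ, then size(tδ) ≤ size(β) for every substitution δ = {xᵢ ↦ sᵢ | 1 ≤ i ≤ n} where all sᵢ are ground terms with size(sᵢ) = kᵢ. -/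
namespace NGCC

variable {F : Type}

section Aux
variable {F : Type}

theorem sum_map_finsetsum {α : Type} (ts : List α) (S : Finset ℕ) (f : ℕ → α → ℕ) :
    ∑ x ∈ S, (ts.map (f x)).sum = (ts.map (fun s => ∑ x ∈ S, f x s)).sum := by
  induction ts with
  | nil => simp
  | cons a l ih => simp [Finset.sum_add_distrib, ih]

theorem list_sum_map_add {α : Type} (l : List α) (f g : α → ℕ) :
    (l.map (fun x => f x + g x)).sum = (l.map f).sum + (l.map g).sum := by
  induction l with
  | nil => simp
  | cons a l ih => simp [ih]; ring

theorem count_eq_zero (x : ℕ) : ∀ (t : Tm F), x ∉ t.varsList → t.count x = 0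
  | Tm.var y, h => by
    simp [Tm.varsList] at h
    simp only [Tm.count]
    rw [if_neg (fun hh => h hh.symm)]
  | Tm.app f ts, h => by
    rw [Tm.count]
    apply List.sum_eq_zero
    intro n hn
    simp only [List.mem_map] at hn
    obtain ⟨s, hs, rfl⟩ := hn
    apply count_eq_zero x s.1
    intro hx
    apply h
    rw [Tm.varsList]
    simp only [List.mem_flatten, List.mem_map]
    exact ⟨s.1.varsList, ⟨s, hs, rfl⟩, hx⟩
  termination_by t => sizeOf t
  decreasing_by simp only [Tm.app.sizeOf_spec]; have := List.sizeOf_lt_of_mem s.2; omega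

theorem subst_size (δ : Subst F) (S : Finset ℕ) :
    ∀ (t : Tm F), (∀ x ∈ t.varsList, x ∈ S) →
      (t.subst δ).size + ∑ x ∈ S, t.count x
        = t.size + ∑ x ∈ S, t.count x * (δ x).size
  | Tm.var y, h => by
    have hy : y ∈ S := h y (by simp [Tm.varsList])
    simp only [Tm.subst, Tm.count, Tm.size]
    rw [Finset.sum_ite_eq S y (fun _ => 1), Finset.sum_congr rfl
      (fun x _ => by rw [ite_mul, one_mul, zero_mul]),
      Finset.sum_ite_eq S y (fun x => (δ x).size)]
    simp [hy]
    omega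
  | Tm.app f ts, h => by
    have IH : ∀ s ∈ ts, (s.subst δ).size + ∑ x ∈ S, s.count x
        = s.size + ∑ x ∈ S, s.count x * (δ x).size := by
      intro s hs
      apply subst_size δ S s
      intro x hx
      apply h
      rw [Tm.varsList]
      simp only [List.mem_flatten, List.mem_map]
      exact ⟨s.varsList, ⟨⟨s, hs⟩, List.mem_attach _ _, rfl⟩, hx⟩
    simp only [Tm.subst, Tm.size, Tm.count]
    simp only [List.attach_map_val, List.map_map, Function.comp]
    rw [sum_map_finsetsum]
    have key : (List.map (fun s => (Tm.subst δ s).size + ∑ x ∈ S, Tm.count x s) ts).sum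
        = (List.map (fun s => s.size + ∑ x ∈ S, Tm.count x s * (δ x).size) ts).sum := by
      rw [List.map_congr_left (fun s hs => IH s hs)]
    rw [list_sum_map_add, list_sum_map_add] at key
    have : ∀ x ∈ S, (List.map (fun t => Tm.count x t) ts).sum * (δ x).size
        = (List.map (fun s => Tm.count x s * (δ x).size) ts).sum := by
      intro x _
      rw [← List.sum_map_mul_right]
    rw [Finset.sum_congr rfl this, sum_map_finsetsum]
    simp only [Function.comp_def] at key ⊢
    omega
  termination_by t => sizeOf t
  decreasing_by simp only [Tm.app.sizeOf_spec]; have := List.sizeOf_lt_of_mem hs; omega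

end Aux

/-- Correctness of the LIA constraint abstraction,
completeness direction. -/
theorem lic_complete {F : Type} [Nonempty F]
    (t β : Tm F) (hβ : β.Ground) (v : ℕ → ℕ)
    (h : licHolds t β v) (δ : Subst F)
    (hδ : ∀ x ∈ t.varsIn, (δ x).Ground ∧ (δ x).size = v x) :
    (t.subst δ).size ≤ β.size := by
  obtain ⟨h1, h2⟩ := h
  have key := subst_size δ (varsFinset t) t (fun x hx => List.mem_toFinset.mpr hx)
  have hv : ∑ x ∈ varsFinset t, t.count x * (δ x).size
      = ∑ x ∈ varsFinset t, t.count x * v x := by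
    refine Finset.sum_congr rfl fun x hx => ?_
    rw [(hδ x (List.mem_toFinset.mp hx)).2]
  rw [hv] at key
  have keyZ : ((t.subst δ).size : ℤ) + ∑ x ∈ varsFinset t, (t.count x : ℤ)
      = (t.size : ℤ) + ∑ x ∈ varsFinset t, (t.count x : ℤ) * (v x : ℤ) := by
    exact_mod_cast key
  have hle : ((t.subst δ).size : ℤ) ≤ (β.size : ℤ) := by linarith
  exact_mod_cast hle

end NGCC
end
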